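/- Let n₁,…,n_m be unit vectors in ℝ², b₁,…,b_m > 0, r > 0 and p ∈ ℝ², and let K = (⋂ᵢ {x ∈ ℝ² : ⟪nᵢ, x − p⟫ ≤ bᵢ}) ∩ closedBall(p, r). Then for every q ∈ ℝ² with q ≠ p, if q' is the unique point of the frontier of K on the ray {p + t(q − p) : t > 0}, then ‖q − p‖ / ‖q' − p‖ = max{ maxᵢ ⟪nᵢ, q − p⟫ / bᵢ, ‖q − p‖ / r }. -/
import Mathlib


open RealInnerProductSpace

/-- **Algebraic form of the convex set distance (half-planes intersected with a disk).**
For `K = (⋂ᵢ {x | ⟪nᵢ, x - p⟫ ≤ bᵢ}) ∩ closedBall p r` with unit normals `nᵢ`, offsets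
`bᵢ > 0` and radius `r > 0`, and any `q ≠ p`, if `q'` is the unique frontier point of `K`
on the ray from `p` through `q`, then
`‖q - p‖ / ‖q' - p‖ = max (maxᵢ ⟪nᵢ, q - p⟫ / bᵢ) (‖q - p‖ / r)`. -/
theorem convex_set_distance_algebraic
    {ι : Type*} [Fintype ι] [Nonempty ι]
    (n : ι → EuclideanSpace ℝ (Fin 2)) (b : ι → ℝ)
    (hn : ∀ i, ‖n i‖ = 1) (hb : ∀ i, 0 < b i)
    (r : ℝ) (hr : 0 < r)
    (p : EuclideanSpace ℝ (Fin 2))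
    (K : Set (EuclideanSpace ℝ (Fin 2)))
    (hK : K = (⋂ i, {x : EuclideanSpace ℝ (Fin 2) | ⟪n i, x - p⟫ ≤ b i}) ∩
      Metric.closedBall p r)
    (q : EuclideanSpace ℝ (Fin 2)) (hq : q ≠ p)
    (q' : EuclideanSpace ℝ (Fin 2))
    (hq'mem : q' ∈ frontier K)
    (hq'ray : ∃ t : ℝ, 0 < t ∧ q' = p + t • (q - p))
    (hq'uniq : ∀ y : EuclideanSpace ℝ (Fin 2),
      y ∈ frontier K → (∃ t : ℝ, 0 < t ∧ y = p + t • (q - p)) → y = q') :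
    ‖q - p‖ / ‖q' - p‖ =
      max (Finset.univ.sup' Finset.univ_nonempty (fun i => ⟪n i, q - p⟫ / b i))
        (‖q - p‖ / r) := by
  set v := q - p with hv
  have hvne : v ≠ 0 := sub_ne_zero.mpr hq
  have hvnorm : 0 < ‖v‖ := norm_pos_iff.mpr hvne
  set A := Finset.univ.sup' Finset.univ_nonempty (fun i => ⟪n i, v⟫ / b i) with hA
  set M := max A (‖v‖ / r) with hM
  have hMpos : 0 < M := lt_of_lt_of_le (div_pos hvnorm hr) (le_max_right _ _)
  have hle : ∀ i, ⟪n i, v⟫ ≤ M * b i := by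
    intro i
    have h1 : ⟪n i, v⟫ / b i ≤ A :=
      Finset.le_sup' (fun i => ⟪n i, v⟫ / b i) (Finset.mem_univ i)
    have h2 : ⟪n i, v⟫ / b i ≤ M := h1.trans (le_max_left _ _)
    have hbi := hb i
    calc ⟪n i, v⟫ = (⟪n i, v⟫ / b i) * b i := by field_simp
    _ ≤ M * b i := by nlinarith
  have hball : ‖v‖ ≤ M * r := by
    have h2 : ‖v‖ / r ≤ M := le_max_right A (‖v‖ / r)
    calc ‖v‖ = (‖v‖ / r) * r := by field_simp
    _ ≤ M * r := by nlinarith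
  -- points on the ray with parameter ≤ M⁻¹ are in K
  have hmemK : ∀ t : ℝ, 0 ≤ t → t ≤ M⁻¹ → p + t • v ∈ K := by
    intro t ht htM
    have htM1 : t * M ≤ 1 := by
      calc t * M ≤ M⁻¹ * M := by nlinarith
      _ = 1 := inv_mul_cancel₀ hMpos.ne'
    rw [hK]
    constructor
    · simp only [Set.mem_iInter, Set.mem_setOf_eq]
      intro i
      rw [add_sub_cancel_left, inner_smul_right]
      have := hle i
      have hbi := hb i
      nlinarith
    · rw [Metric.mem_closedBall, dist_eq_norm, add_sub_cancel_left, norm_smul,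
        Real.norm_eq_abs, abs_of_nonneg ht]
      nlinarith
  -- points on the ray with parameter > M⁻¹ are not in K
  obtain ⟨i₀, -, hi₀⟩ :=
    Finset.exists_mem_eq_sup' (Finset.univ_nonempty (α := ι)) (fun i => ⟪n i, v⟫ / b i)
  have hnot : ∀ t : ℝ, M⁻¹ < t → p + t • v ∉ K := by
    intro t ht hmem
    rw [hK] at hmem
    have htM : 1 < t * M := by
      have h : M⁻¹ * M < t * M := by nlinarith
      rwa [inv_mul_cancel₀ hMpos.ne'] at h
    rcases max_choice A (‖v‖ / r) with hc | hc
    · have h1 := hmem.1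
      simp only [Set.mem_iInter, Set.mem_setOf_eq] at h1
      have h2 := h1 i₀
      rw [add_sub_cancel_left, inner_smul_right] at h2
      have hMA : M = A := hM.trans hc
      have heq : ⟪n i₀, v⟫ = M * b i₀ := by
        rw [hMA, hA, hi₀, div_mul_cancel₀ _ (hb i₀).ne']
      have hbi := hb i₀
      rw [heq] at h2
      nlinarith [mul_pos (sub_pos.mpr htM) hbi]
    · have h2 := hmem.2
      rw [Metric.mem_closedBall, dist_eq_norm, add_sub_cancel_left, norm_smul,
        Real.norm_eq_abs, abs_of_nonneg (le_of_lt (lt_trans (inv_pos.mpr hMpos) ht))] at h2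
      have hMr : M = ‖v‖ / r := hM.trans hc
      have heq : ‖v‖ = M * r := by
        rw [hMr]
        field_simp
      nlinarith
  -- the point p + M⁻¹ • v is on the frontier of K
  have hy0 : p + M⁻¹ • v ∈ frontier K := by
    rw [frontier]
    constructor
    · exact subset_closure (hmemK M⁻¹ (le_of_lt (inv_pos.mpr hMpos)) le_rfl)
    · intro hint
      rcases Metric.mem_nhds_iff.mp (mem_interior_iff_mem_nhds.mp hint) with ⟨ε, hε, hsub⟩
      set t := M⁻¹ + ε / (2 * ‖v‖) with htdef
      have htgt : M⁻¹ < t := by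
        have : 0 < ε / (2 * ‖v‖) := div_pos hε (by positivity)
        linarith
      have hdist : dist (p + t • v) (p + M⁻¹ • v) < ε := by
        rw [dist_eq_norm]
        have : p + t • v - (p + M⁻¹ • v) = (t - M⁻¹) • v := by
          module
        rw [this, norm_smul, Real.norm_eq_abs, abs_of_nonneg (by linarith)]
        have : (t - M⁻¹) = ε / (2 * ‖v‖) := by rw [htdef]; ring
        rw [this]
        rw [div_mul_eq_mul_div, mul_comm]
        rw [div_lt_iff₀ (by positivity)]
        nlinarith
      exact hnot t htgt (hsub (Metric.mem_ball.mpr hdist))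
  -- uniqueness gives q' = p + M⁻¹ • v
  have hq'eq : p + M⁻¹ • v = q' :=
    hq'uniq _ hy0 ⟨M⁻¹, inv_pos.mpr hMpos, rfl⟩
  rw [← hq'eq, add_sub_cancel_left, norm_smul, Real.norm_eq_abs,
    abs_of_nonneg (le_of_lt (inv_pos.mpr hMpos))]
  rw [mul_comm, ← div_div, div_self hvnorm.ne', one_div, inv_inv]
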